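/- arXiv:2501.01783 — 2 statements merged into one kernel-verified Lean document; each statement's English description precedes it below -/
import Mathlib

section
/- Let D ∈ ℕ, 0 < τ_lo ≤ τ_hi, and α : [0,∞) → [τ_lo, τ_hi] Borel measurable with μ_t = exp(−∫_0^t α_s ds) and σ_t = √(1 − μ_t²). Let F̄, τ_min, τ_max > 0, m > e, T_low = m^{−τ_min}, T_up = τ_max log m. Then there exists a constant C̃₁₅ > 0 depending only on (D, τ_lo, τ_min, τ_max, F̄) such that every measurable function f : ℝ^D × ℝ → ℝ^D satisfying ‖f(x,t)‖_∞ ≤ F̄ √(log m)/σ_t for all x ∈ ℝ^D and t > 0 satisfies ℓ_f(x) ≤ C̃₁₅ (log m)² for all x ∈ [−1,1]^D. -/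
open MeasureTheory
open scoped BigOperators ENNReal NNReal

noncomputable section

namespace DMpaper

attribute [local instance] Classical.propDecidable

/-- The cube `[-1,1]^D`. -/
def cube (D : ℕ) : Set (Fin D → ℝ) := Set.Icc (-1) 1

/-- Density of the Gaussian `N(0, σ² I_D)` on `ℝ^D`. -/
def gaussD (D : ℕ) (σ : ℝ) (x : Fin D → ℝ) : ℝ :=
  (2 * Real.pi * σ ^ 2) ^ (-(D : ℝ) / 2) * Real.exp (-(∑ i, x i ^ 2) / (2 * σ ^ 2))

/-- `μ_t = exp (-∫_0^t α_s ds)` for the forward process. -/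
def muT (α : ℝ → ℝ) (t : ℝ) : ℝ := Real.exp (-∫ s in Set.Ioc (0 : ℝ) t, α s)

/-- `σ_t = √(1 - μ_t²)` for the forward process. -/
def sigmaT (α : ℝ → ℝ) (t : ℝ) : ℝ := Real.sqrt (1 - muT α t ^ 2)

/-- The marginal density `p_t(x) = ∫_{[-1,1]^D} p₀(y) φ_{σ_t}(x - μ_t y) dy`
of the forward process. -/
def fwdDen (D : ℕ) (α : ℝ → ℝ) (p₀ : (Fin D → ℝ) → ℝ) (t : ℝ) (x : Fin D → ℝ) : ℝ :=
  ∫ y in cube D, p₀ y * gaussD D (sigmaT α t) (x - muT α t • y)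

/-- `p₀` is a probability density supported on `[-1,1]^D`, and `α` is Borel measurable
with values in `[τlo, τhi]` on `[0,∞)`. -/
def ForwardHyp (D : ℕ) (τlo τhi : ℝ) (α : ℝ → ℝ) (p₀ : (Fin D → ℝ) → ℝ) : Prop :=
  Measurable p₀ ∧ (∀ x, 0 ≤ p₀ x) ∧ (∀ x, x ∉ cube D → p₀ x = 0) ∧ (∫ x, p₀ x) = 1 ∧
    Measurable α ∧ ∀ t, 0 ≤ t → τlo ≤ α t ∧ α t ≤ τhi

/-- The score-matching loss
`ℓ_f(x) = ∫_{Tl}^{Tu} ∫_{ℝ^D} ‖f(y,t) + (y - μ_t x)/σ_t²‖₂² φ_{σ_t}(y - μ_t x) dy dt`. -/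
def lossL (D : ℕ) (α : ℝ → ℝ) (Tl Tu : ℝ) (f : (Fin D → ℝ) → ℝ → Fin D → ℝ)
    (x : Fin D → ℝ) : ℝ :=
  ∫ t in Set.Icc Tl Tu, ∫ y,
    (∑ i, (f y t i + (y i - muT α t * x i) / sigmaT α t ^ 2) ^ 2) *
      gaussD D (sigmaT α t) (y - muT α t • x)


section Aux
open Real

lemma sq_exp_integral {b : ℝ} (hb : 0 < b) :
    ∫ x : ℝ, x ^ 2 * Real.exp (-b * x ^ 2) = Real.sqrt (π / b) / (2 * b) := by
  have h1 : ∫ x : ℝ, x ^ 2 * Real.exp (-b * x ^ 2)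
      = 2 * ∫ x in Set.Ioi (0:ℝ), x ^ 2 * Real.exp (-b * x ^ 2) := by
    rw [← integral_comp_abs (f := fun x => x ^ 2 * Real.exp (-b * x ^ 2))]
    congr 1; ext x; rw [sq_abs]
  have h2 : ∫ x in Set.Ioi (0:ℝ), x ^ 2 * Real.exp (-b * x ^ 2)
      = b ^ (-(((2:ℝ)) + 1) / 2) * (1 / 2) * Real.Gamma (((2:ℝ) + 1) / 2) := by
    rw [← integral_rpow_mul_exp_neg_mul_rpow (by norm_num) (by norm_num) hb]
    refine setIntegral_congr_fun measurableSet_Ioi (fun x hx => ?_)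
    norm_num [show ((2:ℝ)) = ((2:ℕ):ℝ) by norm_num, Real.rpow_natCast]
  have hG : Real.Gamma (((2:ℝ) + 1) / 2) = Real.sqrt π / 2 := by
    have : ((2:ℝ) + 1) / 2 = 1/2 + 1 := by norm_num
    rw [this, Real.Gamma_add_one (by norm_num), Real.Gamma_one_half_eq]
    ring
  rw [h1, h2, hG]
  have h3 : b ^ (-(((2:ℝ)) + 1) / 2) = 1 / (b * Real.sqrt b) := by
    rw [show (-(((2:ℝ)) + 1) / 2) = -(1 + 1/2) by norm_num, Real.rpow_neg hb.le,
      Real.rpow_add hb, Real.rpow_one, ← Real.sqrt_eq_rpow, one_div]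
  have hsb : 0 < Real.sqrt b := Real.sqrt_pos.mpr hb
  rw [h3, Real.sqrt_div pi_pos.le b]
  have hb2 : Real.sqrt b * Real.sqrt b = b := Real.mul_self_sqrt hb.le
  have hsb : 0 < Real.sqrt b := Real.sqrt_pos.mpr hb
  field_simp


/-- 1D Gaussian density. -/
noncomputable def g1 (σ u : ℝ) : ℝ :=
  (2 * Real.pi * σ ^ 2) ^ (-(1:ℝ) / 2) * Real.exp (-u ^ 2 / (2 * σ ^ 2))

lemma g1_eq (σ : ℝ) (hσ : 0 < σ) :
    g1 σ = fun u => (2 * Real.pi * σ ^ 2) ^ (-(1:ℝ) / 2) * Real.exp (-(1/(2*σ^2)) * u ^ 2) := by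
  funext u
  unfold g1
  congr 1
  rw [neg_div, neg_mul, div_eq_inv_mul, one_div, inv_mul_eq_div]

lemma g1_integrable {σ : ℝ} (hσ : 0 < σ) : Integrable (g1 σ) := by
  rw [g1_eq σ hσ]
  exact (integrable_exp_neg_mul_sq (by positivity)).const_mul _

lemma const_pow_aux {σ : ℝ} (hσ : 0 < σ) :
    (2 * Real.pi * σ ^ 2) ^ (-(1:ℝ) / 2) * Real.sqrt (2 * Real.pi * σ ^ 2) = 1 := by
  have h : (0:ℝ) < 2 * Real.pi * σ ^ 2 := by positivity
  rw [Real.sqrt_eq_rpow, ← Real.rpow_add h]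
  norm_num

lemma g1_integral {σ : ℝ} (hσ : 0 < σ) : ∫ u, g1 σ u = 1 := by
  rw [g1_eq σ hσ]
  rw [integral_const_mul, integral_gaussian]
  have h : π / (1 / (2 * σ ^ 2)) = 2 * π * σ ^ 2 := by field_simp
  rw [h, const_pow_aux hσ]

lemma g1_sq_integrable {σ : ℝ} (hσ : 0 < σ) : Integrable (fun u => u ^ 2 * g1 σ u) := by
  rw [g1_eq σ hσ]
  have : Integrable (fun u : ℝ => u ^ 2 * Real.exp (-(1/(2*σ^2)) * u ^ 2)) := by
    have := integrable_rpow_mul_exp_neg_mul_sq (b := 1/(2*σ^2)) (by positivity)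
      (s := ((2:ℕ):ℝ)) (by norm_num)
    simpa [Real.rpow_natCast] using this
  have heq : (fun u : ℝ => u ^ 2 * ((2 * Real.pi * σ ^ 2) ^ (-(1:ℝ) / 2) * Real.exp (-(1/(2*σ^2)) * u ^ 2)))
      = fun u : ℝ => (2 * Real.pi * σ ^ 2) ^ (-(1:ℝ) / 2) * (u ^ 2 * Real.exp (-(1/(2*σ^2)) * u ^ 2)) := by
    funext u; ring
  rw [heq]
  exact this.const_mul _

lemma g1_sq_integral {σ : ℝ} (hσ : 0 < σ) : ∫ u, u ^ 2 * g1 σ u = σ ^ 2 := by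
  rw [g1_eq σ hσ]
  have hb : (0:ℝ) < 1 / (2 * σ ^ 2) := by positivity
  calc ∫ u, u ^ 2 * ((2 * Real.pi * σ ^ 2) ^ (-(1:ℝ) / 2) * Real.exp (-(1/(2*σ^2)) * u ^ 2))
      = (2 * Real.pi * σ ^ 2) ^ (-(1:ℝ) / 2) * ∫ u, u ^ 2 * Real.exp (-(1/(2*σ^2)) * u ^ 2) := by
        rw [← integral_const_mul]; congr 1; ext u; ring
    _ = (2 * Real.pi * σ ^ 2) ^ (-(1:ℝ) / 2) * (Real.sqrt (2 * Real.pi * σ ^ 2) * σ ^ 2) := by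
        rw [sq_exp_integral hb]
        congr 1
        rw [show π / (1 / (2 * σ ^ 2)) = 2 * π * σ ^ 2 by field_simp]
        have hσ2 : σ ^ 2 ≠ 0 := by positivity
        field_simp
    _ = σ ^ 2 := by rw [← mul_assoc, const_pow_aux hσ, one_mul]




lemma gaussD_nonneg (D : ℕ) (σ : ℝ) (x : Fin D → ℝ) : 0 ≤ gaussD D σ x := by
  unfold gaussD; positivity

lemma gaussD_eq_prod (D : ℕ) (σ : ℝ) (x : Fin D → ℝ) :
    gaussD D σ x = ∏ i, g1 σ (x i) := by
  unfold gaussD g1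
  have hbase : (0:ℝ) ≤ 2 * Real.pi * σ ^ 2 := by positivity
  have h1 : (2 * Real.pi * σ ^ 2) ^ (-(D : ℝ) / 2)
      = ((2 * Real.pi * σ ^ 2) ^ (-(1:ℝ) / 2)) ^ (D : ℕ) := by
    rw [show (-(D : ℝ) / 2) = (-(1:ℝ)/2) * (D:ℕ) by push_cast; ring,
      Real.rpow_mul hbase, Real.rpow_natCast]
  have h2 : Real.exp (-(∑ i, x i ^ 2) / (2 * σ ^ 2))
      = ∏ i, Real.exp (-x i ^ 2 / (2 * σ ^ 2)) := by
    rw [← Real.exp_sum]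
    congr 1
    rw [← Finset.sum_div, ← Finset.sum_neg_distrib]
  rw [h1, h2, Finset.prod_mul_distrib, Finset.prod_const, Finset.card_univ, Fintype.card_fin]

lemma integrable_gaussD (D : ℕ) {σ : ℝ} (hσ : 0 < σ) : Integrable (gaussD D σ) := by
  have : gaussD D σ = fun x => ∏ i, g1 σ (x i) := funext (gaussD_eq_prod D σ)
  rw [this]
  exact Integrable.fintype_prod (fun _ => g1_integrable hσ)

lemma integral_gaussD (D : ℕ) {σ : ℝ} (hσ : 0 < σ) : ∫ y, gaussD D σ y = 1 := by
  simp_rw [gaussD_eq_prod D σ]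
  rw [integral_fintype_prod_volume_eq_prod (f := fun _ : Fin D => g1 σ)]
  simp [g1_integral hσ]

noncomputable def hco (σ : ℝ) (i₀ i : Fin D) (u : ℝ) : ℝ := (if i = i₀ then u ^ 2 else 1) * g1 σ u

lemma coord_eq_prod (D : ℕ) (σ : ℝ) (i₀ : Fin D) (y : Fin D → ℝ) :
    y i₀ ^ 2 * gaussD D σ y = ∏ i, hco σ i₀ i (y i) := by
  unfold hco
  rw [Finset.prod_mul_distrib, Finset.prod_ite_eq' Finset.univ i₀ (fun i => y i ^ 2),
    if_pos (Finset.mem_univ i₀), gaussD_eq_prod]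

lemma hco_integrable {σ : ℝ} (hσ : 0 < σ) (i₀ i : Fin D) : Integrable (hco σ i₀ i) := by
  unfold hco
  by_cases h : i = i₀ <;> simp [h]
  · exact g1_sq_integrable hσ
  · exact g1_integrable hσ

lemma integrable_coord_sq_gaussD (D : ℕ) {σ : ℝ} (hσ : 0 < σ) (i₀ : Fin D) :
    Integrable (fun y : Fin D → ℝ => y i₀ ^ 2 * gaussD D σ y) := by
  simp_rw [coord_eq_prod D σ i₀]
  exact Integrable.fintype_prod (fun i => hco_integrable hσ i₀ i)

lemma integral_coord_sq_gaussD (D : ℕ) {σ : ℝ} (hσ : 0 < σ) (i₀ : Fin D) :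
    ∫ y : Fin D → ℝ, y i₀ ^ 2 * gaussD D σ y = σ ^ 2 := by
  simp_rw [coord_eq_prod D σ i₀]
  rw [integral_fintype_prod_volume_eq_prod (f := fun i => hco σ i₀ i)]
  have h : ∀ i : Fin D, ∫ u, hco σ i₀ i u = if i = i₀ then σ ^ 2 else 1 := by
    intro i
    unfold hco
    by_cases h : i = i₀ <;> simp [h]
    · exact g1_sq_integral hσ
    · exact g1_integral hσ
  simp_rw [h]
  rw [Finset.prod_ite_eq' Finset.univ i₀ (fun _ => σ ^ 2), if_pos (Finset.mem_univ i₀)]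

lemma integrable_sumsq_gaussD (D : ℕ) {σ : ℝ} (hσ : 0 < σ) :
    Integrable (fun y : Fin D → ℝ => (∑ i, y i ^ 2) * gaussD D σ y) := by
  simp_rw [Finset.sum_mul]
  exact integrable_finset_sum _ (fun i _ => integrable_coord_sq_gaussD D hσ i)

lemma integral_sumsq_gaussD (D : ℕ) {σ : ℝ} (hσ : 0 < σ) :
    ∫ y : Fin D → ℝ, (∑ i, y i ^ 2) * gaussD D σ y = D * σ ^ 2 := by
  simp_rw [Finset.sum_mul]
  rw [integral_finset_sum _ (fun i _ => integrable_coord_sq_gaussD D hσ i)]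
  simp [integral_coord_sq_gaussD D hσ]



lemma inner_bound (D : ℕ) {σ : ℝ} (hσ : 0 < σ) {K : ℝ} (hK : 0 ≤ K)
    (c : Fin D → ℝ) (F : (Fin D → ℝ) → Fin D → ℝ)
    (hF : ∀ y i, |F y i| ≤ K) :
    ∫ y, (∑ i, (F y i + (y i - c i) / σ ^ 2) ^ 2) * gaussD D σ (y - c)
      ≤ 2 * D * K ^ 2 + 2 * D / σ ^ 2 := by
  set Z : (Fin D → ℝ) → ℝ :=
    fun z => (2 * D * K ^ 2 + (2 / σ ^ 4) * ∑ i, z i ^ 2) * gaussD D σ z with hZ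
  have hZint : Integrable Z := by
    have : Z = fun z => (2 * D * K ^ 2) * gaussD D σ z
        + (2 / σ ^ 4) * ((∑ i, z i ^ 2) * gaussD D σ z) := by
      funext z; simp only [hZ]; ring
    rw [this]
    exact ((integrable_gaussD D hσ).const_mul _).add
      ((integrable_sumsq_gaussD D hσ).const_mul _)
  have hBint : Integrable (fun y => Z (y - c)) := hZint.comp_sub_right c
  have hmono : ∀ y, (∑ i, (F y i + (y i - c i) / σ ^ 2) ^ 2) * gaussD D σ (y - c)
      ≤ Z (y - c) := by
    intro y
    have hg := gaussD_nonneg D σ (y - c)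
    have hsum : (∑ i, (F y i + (y i - c i) / σ ^ 2) ^ 2)
        ≤ 2 * D * K ^ 2 + (2 / σ ^ 4) * ∑ i, (y - c) i ^ 2 := by
      have h1 : ∀ i, (F y i + (y i - c i) / σ ^ 2) ^ 2
          ≤ 2 * K ^ 2 + (2 / σ ^ 4) * (y i - c i) ^ 2 := by
        intro i
        have h2 : (F y i) ^ 2 ≤ K ^ 2 := sq_le_sq' (neg_le_of_abs_le (hF y i)) (le_of_abs_le (hF y i))
        have h3 : ((y i - c i) / σ ^ 2) ^ 2 = (y i - c i) ^ 2 / σ ^ 4 := by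
          rw [div_pow]; ring_nf
        have h4 : (F y i + (y i - c i) / σ ^ 2) ^ 2
            ≤ 2 * (F y i) ^ 2 + 2 * ((y i - c i) / σ ^ 2) ^ 2 := by
          nlinarith [sq_nonneg (F y i - (y i - c i) / σ ^ 2)]
        have h5 : (2 / σ ^ 4) * (y i - c i) ^ 2 = 2 * ((y i - c i) / σ ^ 2) ^ 2 := by
          rw [h3]; ring
        linarith
      calc (∑ i, (F y i + (y i - c i) / σ ^ 2) ^ 2)
          ≤ ∑ i : Fin D, (2 * K ^ 2 + (2 / σ ^ 4) * (y i - c i) ^ 2) :=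
            Finset.sum_le_sum (fun i _ => h1 i)
        _ = 2 * D * K ^ 2 + (2 / σ ^ 4) * ∑ i, (y i - c i) ^ 2 := by
            rw [Finset.sum_add_distrib, Finset.sum_const, Finset.card_univ, Fintype.card_fin,
              ← Finset.mul_sum]
            push_cast; ring
        _ = 2 * D * K ^ 2 + (2 / σ ^ 4) * ∑ i, (y - c) i ^ 2 := by
            simp [Pi.sub_apply]
    simpa only [hZ] using mul_le_mul_of_nonneg_right hsum hg
  have hnn : ∀ y, 0 ≤ (∑ i, (F y i + (y i - c i) / σ ^ 2) ^ 2) * gaussD D σ (y - c) := by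
    intro y
    exact mul_nonneg (Finset.sum_nonneg fun i _ => sq_nonneg _) (gaussD_nonneg D σ _)
  have hle := integral_mono_of_nonneg (Filter.Eventually.of_forall hnn) hBint
    (Filter.Eventually.of_forall hmono)
  refine hle.trans ?_
  rw [integral_sub_right_eq_self Z c]
  have : ∫ z, Z z = 2 * D * K ^ 2 * 1 + (2 / σ ^ 4) * (D * σ ^ 2) := by
    have : Z = fun z => (2 * D * K ^ 2) * gaussD D σ z
        + (2 / σ ^ 4) * ((∑ i, z i ^ 2) * gaussD D σ z) := by
      funext z; simp only [hZ]; ring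
    rw [this, integral_add ((integrable_gaussD D hσ).const_mul _)
      ((integrable_sumsq_gaussD D hσ).const_mul _), integral_const_mul, integral_const_mul,
      integral_gaussD D hσ, integral_sumsq_gaussD D hσ]
  rw [this]
  have hσ2 : σ ^ 2 ≠ 0 := by positivity
  apply le_of_eq
  field_simp



section sigma_facts
variable {τlo τhi : ℝ} {α : ℝ → ℝ}

lemma int_alpha_ge (hτlo : 0 < τlo) (hα : Measurable α)
    (hb : ∀ t, 0 ≤ t → τlo ≤ α t ∧ α t ≤ τhi) {t : ℝ} (ht : 0 < t) :
    τlo * t ≤ ∫ s in Set.Ioc (0:ℝ) t, α s := by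
  have hInt : IntegrableOn α (Set.Ioc (0:ℝ) t) := by
    have hvol : volume (Set.Ioc (0:ℝ) t) < ⊤ := by
      rw [Real.volume_Ioc]; exact ENNReal.ofReal_lt_top
    refine Integrable.mono' (integrable_const (max |τlo| |τhi|))
      hα.aestronglyMeasurable.restrict ?_
    · refine (ae_restrict_iff' measurableSet_Ioc).2 (Filter.Eventually.of_forall ?_)
      intro s hs
      have h := hb s hs.1.le
      rw [Real.norm_eq_abs, abs_le]
      constructor
      · calc -(max |τlo| |τhi|) ≤ -|τlo| := by simp [le_max_left]
          _ ≤ τlo := neg_abs_le τlo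
          _ ≤ α s := h.1
      · calc α s ≤ τhi := h.2
          _ ≤ |τhi| := le_abs_self τhi
          _ ≤ max |τlo| |τhi| := le_max_right _ _
  have hconst : ∫ s in Set.Ioc (0:ℝ) t, (τlo : ℝ) = τlo * t := by
    rw [setIntegral_const, measureReal_def, Real.volume_Ioc, smul_eq_mul,
      ENNReal.toReal_ofReal (by linarith : (0:ℝ) ≤ t - 0)]
    ring
  rw [← hconst]
  refine setIntegral_mono_on (integrable_const _) hInt measurableSet_Ioc ?_
  exact fun s hs => (hb s hs.1.le).1

lemma muT_le (hτlo : 0 < τlo) (hα : Measurable α)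
    (hb : ∀ t, 0 ≤ t → τlo ≤ α t ∧ α t ≤ τhi) {t : ℝ} (ht : 0 < t) :
    muT α t ≤ Real.exp (-(τlo * t)) :=
  Real.exp_le_exp.2 (neg_le_neg (int_alpha_ge hτlo hα hb ht))

lemma muT_pos (α : ℝ → ℝ) (t : ℝ) : 0 < muT α t := Real.exp_pos _

lemma sigmaT_sq (hτlo : 0 < τlo) (hα : Measurable α)
    (hb : ∀ t, 0 ≤ t → τlo ≤ α t ∧ α t ≤ τhi) {t : ℝ} (ht : 0 < t) :
    sigmaT α t ^ 2 = 1 - muT α t ^ 2 := by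
  apply Real.sq_sqrt
  have h1 : muT α t ≤ Real.exp (-(τlo * t)) := muT_le hτlo hα hb ht
  have h2 : Real.exp (-(τlo * t)) < 1 := by
    rw [Real.exp_lt_one_iff]; nlinarith
  nlinarith [muT_pos α t]

lemma sigmaT_sq_ge (hτlo : 0 < τlo) (hα : Measurable α)
    (hb : ∀ t, 0 ≤ t → τlo ≤ α t ∧ α t ≤ τhi) {t : ℝ} (ht : 0 < t) :
    2 * τlo * t / (1 + 2 * τlo * t) ≤ sigmaT α t ^ 2 := by
  rw [sigmaT_sq hτlo hα hb ht]
  have h1 : muT α t ^ 2 ≤ Real.exp (-(2 * τlo * t)) := by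
    have := muT_le hτlo hα hb ht
    have hμ := (muT_pos α t).le
    calc muT α t ^ 2 ≤ Real.exp (-(τlo * t)) ^ 2 := by nlinarith
      _ = Real.exp (-(2 * τlo * t)) := by
          rw [← Real.exp_nat_mul]; ring_nf
  have hx : 0 < 2 * τlo * t := by positivity
  have hx1 : 0 < 1 + 2 * τlo * t := by linarith
  have h2 : Real.exp (-(2 * τlo * t)) ≤ 1 / (1 + 2 * τlo * t) := by
    rw [Real.exp_neg, one_div]
    have h3 : 1 + 2 * τlo * t ≤ Real.exp (2 * τlo * t) := by
      linarith [Real.add_one_le_exp (2 * τlo * t)]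
    exact inv_anti₀ hx1 h3
  have : 1 - 1 / (1 + 2 * τlo * t) = 2 * τlo * t / (1 + 2 * τlo * t) := by field_simp; ring
  linarith [this ▸ (by linarith [h1.trans h2] : 1 - muT α t ^ 2 ≥ 1 - 1 / (1 + 2 * τlo * t))]

lemma sigmaT_pos (hτlo : 0 < τlo) (hα : Measurable α)
    (hb : ∀ t, 0 ≤ t → τlo ≤ α t ∧ α t ≤ τhi) {t : ℝ} (ht : 0 < t) :
    0 < sigmaT α t := by
  have h := sigmaT_sq_ge hτlo hα hb ht
  have hx : 0 < 2 * τlo * t := by positivity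
  have hx1 : 0 < 1 + 2 * τlo * t := by linarith
  have : 0 < sigmaT α t ^ 2 := lt_of_lt_of_le (by positivity) h
  exact Real.sqrt_pos.2 (by nlinarith [this, sigmaT_sq hτlo hα hb ht])

lemma inv_sigmaT_sq_le (hτlo : 0 < τlo) (hα : Measurable α)
    (hb : ∀ t, 0 ≤ t → τlo ≤ α t ∧ α t ≤ τhi) {t : ℝ} (ht : 0 < t) :
    1 / sigmaT α t ^ 2 ≤ (2 * τlo * t)⁻¹ + 1 := by
  have h := sigmaT_sq_ge hτlo hα hb ht
  have hx : 0 < 2 * τlo * t := by positivity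
  have hx1 : 0 < 1 + 2 * τlo * t := by linarith
  have hσ : 0 < sigmaT α t ^ 2 := lt_of_lt_of_le (by positivity) h
  rw [div_le_iff₀ hσ]
  have h2 : ((2 * τlo * t)⁻¹ + 1) * (2 * τlo * t / (1 + 2 * τlo * t)) = 1 := by
    field_simp
  calc (1:ℝ) = ((2 * τlo * t)⁻¹ + 1) * (2 * τlo * t / (1 + 2 * τlo * t)) := h2.symm
    _ ≤ ((2 * τlo * t)⁻¹ + 1) * sigmaT α t ^ 2 := by
        apply mul_le_mul_of_nonneg_left h; positivity

end sigma_facts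
end Aux

/-- Proposition C.3 of the paper, boundedness part: the
score-matching loss of any bounded measurable `f` is bounded by `C (log m)²`
on `[-1,1]^D`. -/
theorem statement_11
    (D : ℕ) (hD : 0 < D) (τlo τhi Fb τmin τmax : ℝ)
    (hτlo : 0 < τlo) (hττ : τlo ≤ τhi) (hF : 0 < Fb)
    (hτmin : 0 < τmin) (hτmax : 0 < τmax) :
    ∃ C₁₅ : ℝ, 0 < C₁₅ ∧
      ∀ m : ℝ, Real.exp 1 < m →
      ∀ α : ℝ → ℝ, Measurable α → (∀ t, 0 ≤ t → τlo ≤ α t ∧ α t ≤ τhi) →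
      ∀ f : (Fin D → ℝ) → ℝ → Fin D → ℝ,
        Measurable (fun p : (Fin D → ℝ) × ℝ => f p.1 p.2) →
        (∀ (x : Fin D → ℝ) (t : ℝ), 0 < t → ∀ i,
          |f x t i| ≤ Fb * Real.sqrt (Real.log m) / sigmaT α t) →
        ∀ x ∈ cube D,
          lossL D α (m ^ (-τmin)) (τmax * Real.log m) f x ≤ C₁₅ * Real.log m ^ 2 := by
  have hD' : (0:ℝ) < D := by exact_mod_cast hD
  set A : ℝ := (|Real.log τmax| + 1 + τmin) / (2 * τlo) + τmax with hA_def
  have hA : 0 < A := by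
    have h1 : 0 ≤ (|Real.log τmax| + 1 + τmin) / (2 * τlo) := by positivity
    rw [hA_def]; linarith
  refine ⟨2 * D * (Fb ^ 2 + 1) * A, by positivity, ?_⟩
  intro m hm α hα hb f hfmeas hfbd x hx
  set L := Real.log m with hL_def
  have hm0 : 0 < m := lt_trans (Real.exp_pos 1) hm
  have hL1 : 1 < L := by
    have := Real.log_lt_log (Real.exp_pos 1) hm
    rwa [Real.log_exp] at this
  have hL0 : 0 < L := by linarith
  set Tl : ℝ := m ^ (-τmin) with hTl_def
  set Tu : ℝ := τmax * L with hTu_def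
  have hTl0 : 0 < Tl := Real.rpow_pos_of_pos hm0 _
  have hTu0 : 0 < Tu := by rw [hTu_def]; positivity
  by_cases hord : Tl ≤ Tu
  swap
  · unfold lossL
    rw [Set.Icc_eq_empty hord, Measure.restrict_empty, integral_zero_measure]
    positivity
  -- pointwise bound on the inner integral
  have hinner : ∀ t ∈ Set.Icc Tl Tu,
      (∫ y, (∑ i, (f y t i + (y i - muT α t * x i) / sigmaT α t ^ 2) ^ 2) *
        gaussD D (sigmaT α t) (y - muT α t • x))
      ≤ 2 * D * (Fb ^ 2 + 1) * L * ((2 * τlo * t)⁻¹ + 1) := by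
    intro t ht
    have ht0 : 0 < t := lt_of_lt_of_le hTl0 ht.1
    have hσ := sigmaT_pos hτlo hα hb ht0
    set K : ℝ := Fb * Real.sqrt L / sigmaT α t with hK_def
    have hK : 0 ≤ K := by positivity
    have h1 := inner_bound D hσ hK (muT α t • x) (fun y => f y t)
      (fun y i => hfbd y t ht0 i)
    simp only [Pi.smul_apply, smul_eq_mul] at h1
    have hK2 : K ^ 2 = Fb ^ 2 * L / sigmaT α t ^ 2 := by
      rw [hK_def, div_pow, mul_pow, Real.sq_sqrt hL0.le]
    have h2 : 2 * (D:ℝ) * K ^ 2 + 2 * D / sigmaT α t ^ 2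
        = 2 * D * (Fb ^ 2 * L + 1) * (1 / sigmaT α t ^ 2) := by
      rw [hK2]; field_simp
    have h3 : (0:ℝ) ≤ 2 * D * (Fb ^ 2 * L + 1) := by positivity
    have h4 := inv_sigmaT_sq_le hτlo hα hb ht0
    have h5 : 2 * (D:ℝ) * (Fb ^ 2 * L + 1) * (1 / sigmaT α t ^ 2)
        ≤ 2 * D * (Fb ^ 2 * L + 1) * ((2 * τlo * t)⁻¹ + 1) :=
      mul_le_mul_of_nonneg_left h4 h3
    have h7 : (0:ℝ) ≤ (2 * τlo * t)⁻¹ + 1 := by positivity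
    have h6 : 2 * (D:ℝ) * (Fb ^ 2 * L + 1) * ((2 * τlo * t)⁻¹ + 1)
        ≤ 2 * D * (Fb ^ 2 + 1) * L * ((2 * τlo * t)⁻¹ + 1) := by
      apply mul_le_mul_of_nonneg_right _ h7
      nlinarith [sq_nonneg Fb]
    linarith
  -- the dominating function and its integral
  unfold lossL
  set H : ℝ → ℝ := fun t => 2 * D * (Fb ^ 2 + 1) * L * ((2 * τlo * t)⁻¹ + 1) with hH_def
  have hHcont : ContinuousOn H (Set.Icc Tl Tu) := by
    apply ContinuousOn.mul continuousOn_const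
    apply ContinuousOn.add _ continuousOn_const
    apply ContinuousOn.inv₀ (continuous_const.mul continuous_id).continuousOn
    intro t ht
    have : 0 < t := lt_of_lt_of_le hTl0 ht.1
    show 2 * τlo * t ≠ 0
    positivity
  have hHint : IntegrableOn H (Set.Icc Tl Tu) := hHcont.integrableOn_Icc
  have hle : (∫ t in Set.Icc Tl Tu, ∫ y,
      (∑ i, (f y t i + (y i - muT α t * x i) / sigmaT α t ^ 2) ^ 2) *
        gaussD D (sigmaT α t) (y - muT α t • x)) ≤ ∫ t in Set.Icc Tl Tu, H t := by
    apply integral_mono_of_nonneg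
    · exact Filter.Eventually.of_forall fun t => integral_nonneg fun y =>
        mul_nonneg (Finset.sum_nonneg fun i _ => sq_nonneg _) (gaussD_nonneg D _ _)
    · exact hHint
    · exact (ae_restrict_iff' measurableSet_Icc).2 (Filter.Eventually.of_forall hinner)
  refine hle.trans ?_
  -- evaluate the integral of H
  have hnz : ∀ u ∈ Set.uIcc Tl Tu, (2 * τlo * u) ≠ 0 := by
    intro u hu
    rw [Set.uIcc_of_le hord] at hu
    have : 0 < u := lt_of_lt_of_le hTl0 hu.1
    positivity
  have hIint : IntervalIntegrable (fun t : ℝ => (2 * τlo * t)⁻¹) volume Tl Tu :=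
    intervalIntegral.intervalIntegrable_inv hnz (continuous_const.mul continuous_id).continuousOn
  open intervalIntegral in
  have hHeval : ∫ t in Set.Icc Tl Tu, H t
      = 2 * D * (Fb ^ 2 + 1) * L * ((2 * τlo)⁻¹ * Real.log (Tu / Tl) + (Tu - Tl)) := by
    rw [MeasureTheory.integral_Icc_eq_integral_Ioc,
      ← intervalIntegral.integral_of_le hord]
    rw [hH_def]
    rw [intervalIntegral.integral_const_mul]
    congr 1
    rw [intervalIntegral.integral_add hIint intervalIntegrable_const,
      intervalIntegral.integral_const, smul_eq_mul, mul_one]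
    congr 1
    simp_rw [mul_inv]
    rw [intervalIntegral.integral_const_mul]
    have h0 : (0:ℝ) ∉ Set.uIcc Tl Tu := by
      rw [Set.uIcc_of_le hord]
      intro h0
      exact absurd h0.1 (not_le.2 hTl0)
    rw [integral_inv h0]
  rw [hHeval]
  -- final arithmetic
  have hlogdiv : Real.log (Tu / Tl) ≤ (|Real.log τmax| + 1 + τmin) * L := by
    rw [Real.log_div (ne_of_gt hTu0) (ne_of_gt hTl0), hTu_def, hTl_def,
      Real.log_mul (ne_of_gt hτmax) (ne_of_gt hL0), Real.log_rpow hm0, ← hL_def]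
    have h1 : Real.log L ≤ L := by linarith [Real.log_le_sub_one_of_pos hL0]
    have h2 : Real.log τmax ≤ |Real.log τmax| * L :=
      (le_abs_self _).trans (le_mul_of_one_le_right (abs_nonneg _) hL1.le)
    nlinarith
  have hbr : (2 * τlo)⁻¹ * Real.log (Tu / Tl) + (Tu - Tl) ≤ A * L := by
    have h2 : (2 * τlo)⁻¹ * Real.log (Tu / Tl)
        ≤ (2 * τlo)⁻¹ * ((|Real.log τmax| + 1 + τmin) * L) :=
      mul_le_mul_of_nonneg_left hlogdiv (by positivity)
    have h3 : Tu - Tl ≤ τmax * L := by rw [hTu_def]; linarith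
    have h4 : A * L = (2 * τlo)⁻¹ * ((|Real.log τmax| + 1 + τmin) * L) + τmax * L := by
      rw [hA_def]; field_simp
    linarith
  have hC0 : (0:ℝ) ≤ 2 * D * (Fb ^ 2 + 1) * L := by positivity
  calc 2 * (D:ℝ) * (Fb ^ 2 + 1) * L * ((2 * τlo)⁻¹ * Real.log (Tu / Tl) + (Tu - Tl))
      ≤ 2 * D * (Fb ^ 2 + 1) * L * (A * L) := mul_le_mul_of_nonneg_left hbr hC0
    _ = 2 * D * (Fb ^ 2 + 1) * A * L ^ 2 := by ring


end DMpaper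

end
end

section
/- Let D ∈ ℕ, K, τ₁ > 0, 0 < τ_lo ≤ τ_hi, and let p₀ be a probability density on ℝ^D supported on [−1,1]^D with τ₁ ≤ p₀(x) ≤ K for all x ∈ [−1,1]^D; let α, μ_t, σ_t, p_t be as in the forward process. Then there exists a constant C > 0 depending only on (D, K, τ₁, τ_hi, τ_lo) such that for every x ∈ ℝ^D and every t > 0, ‖∇_x log p_t(x)‖₂ ≤ (C/σ_t) · max( (‖x‖_∞ − μ_t)/σ_t, 1 ). -/
set_option maxHeartbeats 1000000


open MeasureTheory intervalIntegral Metric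
open scoped BigOperators ENNReal NNReal

noncomputable section

namespace DMpaper

attribute [local instance] Classical.propDecidable

/-- Partial derivative in the `i`-th coordinate. -/
def pderivG (D : ℕ) (i : Fin D) (f : (Fin D → ℝ) → ℝ) : (Fin D → ℝ) → ℝ :=
  fun x => deriv (fun s : ℝ => f (Function.update x i s)) (x i)

/-- Mixed partial derivative for a multi-index `γ`. -/
def mderivG (D : ℕ) (γ : Fin D → ℕ) (f : (Fin D → ℝ) → ℝ) : (Fin D → ℝ) → ℝ :=
  (List.finRange D).foldr (fun i g => (pderivG D i)^[γ i] g) f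

/-- The score function `f₀(x,t) = ∇ₓ log p_t(x)`. -/
def score (D : ℕ) (α : ℝ → ℝ) (p₀ : (Fin D → ℝ) → ℝ) (x : Fin D → ℝ) (t : ℝ) :
    Fin D → ℝ :=
  fun i => pderivG D i (fun z => Real.log (fwdDen D α p₀ t z)) x

/-- The gradient `∇ₓ p_t(x)`. -/
def gradP (D : ℕ) (α : ℝ → ℝ) (p₀ : (Fin D → ℝ) → ℝ) (t : ℝ) (x : Fin D → ℝ) :
    Fin D → ℝ :=
  fun i => pderivG D i (fwdDen D α p₀ t) x

-- AUXILIARY LEMMAS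
def E1 (u : ℝ) : ℝ := Real.exp (-u^2/2)

lemma E1_pos (u : ℝ) : 0 < E1 u := Real.exp_pos _
lemma E1_nonneg (u : ℝ) : 0 ≤ E1 u := (E1_pos u).le
lemma E1_cont : Continuous E1 := by
  unfold E1; continuity

lemma A1_cont : Continuous (fun u : ℝ => |u| * E1 u) := by
  exact (continuous_abs).mul E1_cont

lemma abs_mul_E1_le_one (u : ℝ) : |u| * E1 u ≤ 1 := by
  have h1 : (u^2/2) + 1 ≤ Real.exp (u^2/2) := Real.add_one_le_exp _
  have h2 : |u| ≤ u^2/2 + 1 := by nlinarith [sq_abs u, abs_nonneg u, sq_nonneg (|u| - 1)]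
  have h3 : E1 u = (Real.exp (u^2/2))⁻¹ := by
    unfold E1; rw [← Real.exp_neg]; ring_nf
  have h4 : 0 < Real.exp (u^2/2) := Real.exp_pos _
  rw [h3]
  rw [mul_inv_le_iff₀ h4, one_mul]
  exact h2.trans h1

/-- the absolute first moment of the gaussian -/
def Bconst : ℝ := ∫ u : ℝ, |u| * E1 u

lemma integrable_abs_mul_E1 : Integrable (fun u : ℝ => |u| * E1 u) := by
  have h := (integrable_mul_exp_neg_mul_sq (b := 1/2) (by norm_num)).abs
  refine h.congr (Filter.Eventually.of_forall fun u => ?_)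
  show |u * Real.exp (-(1/2) * u^2)| = |u| * E1 u
  rw [abs_mul, abs_of_pos (Real.exp_pos _)]
  unfold E1; ring_nf

lemma Bconst_nonneg : 0 ≤ Bconst :=
  integral_nonneg fun u => mul_nonneg (abs_nonneg u) (E1_nonneg u)

lemma interval_le_Bconst {a b : ℝ} (hab : a ≤ b) :
    ∫ u in a..b, |u| * E1 u ≤ Bconst := by
  rw [intervalIntegral.integral_of_le hab]
  exact setIntegral_le_integral integrable_abs_mul_E1
    (Filter.Eventually.of_forall fun u => mul_nonneg (abs_nonneg u) (E1_nonneg u))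

lemma intervalIntegral_mono_set' {f : ℝ → ℝ} (hf : Continuous f) (h0 : ∀ x, 0 ≤ f x)
    {a b c d : ℝ} (hac : a ≤ c) (hcd : c ≤ d) (hdb : d ≤ b) :
    ∫ u in c..d, f u ≤ ∫ u in a..b, f u := by
  have i1 : ∫ u in a..b, f u = (∫ u in a..c, f u) + ((∫ u in c..d, f u) + ∫ u in d..b, f u) := by
    rw [integral_add_adjacent_intervals (hf.intervalIntegrable _ _) (hf.intervalIntegrable _ _),
      integral_add_adjacent_intervals (hf.intervalIntegrable _ _) (hf.intervalIntegrable _ _)]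
  have n1 : 0 ≤ ∫ u in a..c, f u := intervalIntegral.integral_nonneg hac fun x _ => h0 x
  have n2 : 0 ≤ ∫ u in d..b, f u := intervalIntegral.integral_nonneg hdb fun x _ => h0 x
  linarith

/-- constant lower bound on interval -/
lemma intervalIntegral_ge_const {c d e : ℝ} (hcd : c ≤ d)
    (h : ∀ u ∈ Set.Icc c d, e ≤ E1 u) :
    (d - c) * e ≤ ∫ u in c..d, E1 u := by
  have := intervalIntegral.integral_mono_on (μ := volume) hcd
    (_root_.intervalIntegrable_const (μ := volume) (c := e))
    (E1_cont.intervalIntegrable _ _) h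
  simpa [intervalIntegral.integral_const, smul_eq_mul, mul_comm] using this

lemma E1_ge_of_sq_le {u : ℝ} (h : u^2 ≤ 4) : Real.exp (-2) ≤ E1 u := by
  unfold E1; apply Real.exp_le_exp.2; linarith

def C1 : ℝ := (Bconst + 2) * Real.exp 2

lemma C1_pos : 0 < C1 :=
  mul_pos (by linarith [Bconst_nonneg]) (Real.exp_pos _)

lemma ulemma_of_nonneg (b m : ℝ) (hm : 0 < m) (hb : 0 ≤ b) :
    ∫ u in (b-m)..(b+m), |u| * E1 u ≤
      C1 * max (b - m) 1 * ∫ u in (b-m)..(b+m), E1 u := by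
  set ℓ := b - m with hℓ
  set r := b + m with hr
  have hlr : ℓ ≤ r := by simp [hℓ, hr]; linarith
  have hIpos : 0 < ∫ u in ℓ..r, E1 u := by
    apply intervalIntegral_pos_of_pos_on (E1_cont.intervalIntegrable _ _)
      (fun x _ => E1_pos x)
    linarith
  have hJB : ∫ u in ℓ..r, |u| * E1 u ≤ Bconst := interval_le_Bconst hlr
  have he2 : (0:ℝ) < Real.exp 2 := Real.exp_pos _
  have hexp2 : Real.exp (-2) * Real.exp 2 = 1 := by
    rw [← Real.exp_add]; norm_num
  rcases le_or_gt ℓ 1 with hcase | hcase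
  · -- left endpoint ≤ 1, max = 1
    have hmax : max (b - m) 1 = 1 := max_eq_right (by rw [← hℓ]; exact hcase)
    rw [hmax, mul_one]
    rcases le_or_gt m (1/2) with hm2 | hm2
    · -- small interval
      have hl2 : -1/2 ≤ ℓ := by rw [hℓ]; linarith
      have hr2 : r ≤ 2 := by rw [hr]; linarith [hcase, hℓ]
      have hJ : ∫ u in ℓ..r, |u| * E1 u ≤ 2 * m := by
        have := intervalIntegral.integral_mono_on hlr
          (A1_cont.intervalIntegrable _ _) (_root_.intervalIntegrable_const (μ := volume) (c := (1:ℝ)))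
          (fun u _ => abs_mul_E1_le_one u)
        simp only [intervalIntegral.integral_const, smul_eq_mul, mul_one] at this
        calc ∫ u in ℓ..r, |u| * E1 u ≤ r - ℓ := this
        _ = 2 * m := by rw [hℓ, hr]; ring
      have hI : 2 * m * Real.exp (-2) ≤ ∫ u in ℓ..r, E1 u := by
        have := intervalIntegral_ge_const hlr (fun u hu => E1_ge_of_sq_le (by
          nlinarith [hu.1, hu.2, hl2, hr2]))
        calc 2 * m * Real.exp (-2) = (r - ℓ) * Real.exp (-2) := by rw [hℓ, hr]; ring
        _ ≤ _ := this
      have hC : Real.exp 2 ≤ C1 := by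
        unfold C1; nlinarith [mul_nonneg Bconst_nonneg he2.le]
      calc ∫ u in ℓ..r, |u| * E1 u ≤ 2 * m := hJ
        _ = (2 * m * Real.exp (-2)) * Real.exp 2 := by
            rw [mul_assoc, hexp2, mul_one]
        _ ≤ (∫ u in ℓ..r, E1 u) * Real.exp 2 := by
            apply mul_le_mul_of_nonneg_right hI he2.le
        _ ≤ C1 * ∫ u in ℓ..r, E1 u := by
            rw [mul_comm]
            exact mul_le_mul_of_nonneg_right hC hIpos.le
    · -- m ≥ 1/2 : interval contains a unit subinterval inside [-1,2]
      set c := max ℓ (-1) with hc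
      have hc1 : -1 ≤ c := le_max_right _ _
      have hc2 : c ≤ 1 := max_le hcase (by norm_num)
      have hsub1 : ℓ ≤ c := le_max_left _ _
      have hsub2 : c + 1 ≤ r := by
        rcases max_cases ℓ (-1) with ⟨h1, h2⟩ | ⟨h1, h2⟩
        · rw [hc, h1, hr, hℓ]; linarith
        · rw [hc, h1]; rw [hr]; linarith
      have hI : Real.exp (-2) ≤ ∫ u in ℓ..r, E1 u := by
        have h1 : Real.exp (-2) ≤ ∫ u in c..(c+1), E1 u := by
          have := intervalIntegral_ge_const (by linarith : c ≤ c + 1)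
            (fun u hu => E1_ge_of_sq_le (by nlinarith [hu.1, hu.2]))
          simpa using this
        exact h1.trans (intervalIntegral_mono_set' E1_cont E1_nonneg hsub1 (by linarith) hsub2)
      calc ∫ u in ℓ..r, |u| * E1 u ≤ Bconst := hJB
        _ = (Bconst * Real.exp 2) * Real.exp (-2) := by
            rw [mul_assoc, mul_comm (Real.exp 2), hexp2, mul_one]
        _ ≤ (Bconst * Real.exp 2) * ∫ u in ℓ..r, E1 u := by
            apply mul_le_mul_of_nonneg_left hI (mul_nonneg Bconst_nonneg he2.le)
        _ ≤ C1 * ∫ u in ℓ..r, E1 u := by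
            apply mul_le_mul_of_nonneg_right _ hIpos.le
            unfold C1; nlinarith [mul_nonneg Bconst_nonneg he2.le]
  · -- ℓ ≥ 1
    have hmax : max (b - m) 1 = ℓ := max_eq_left (by rw [← hℓ]; linarith)
    rw [hmax]
    have hJeq : ∫ u in ℓ..r, |u| * E1 u = ∫ u in ℓ..r, u * E1 u := by
      apply intervalIntegral.integral_congr
      intro u hu
      rw [Set.uIcc_of_le hlr] at hu
      have : 0 ≤ u := by linarith [hu.1]
      simp [abs_of_nonneg this]
    rcases le_or_gt m (1/2) with hm2 | hm2
    · -- small interval: J ≤ r I ≤ 2 ℓ I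
      have hJ : ∫ u in ℓ..r, |u| * E1 u ≤ r * ∫ u in ℓ..r, E1 u := by
        rw [hJeq, ← intervalIntegral.integral_const_mul]
        apply intervalIntegral.integral_mono_on hlr
          ((continuous_id.mul E1_cont).intervalIntegrable _ _)
          ((continuous_const.mul E1_cont).intervalIntegrable _ _)
        intro u hu
        exact mul_le_mul_of_nonneg_right hu.2 (E1_nonneg u)
      have hr2 : r ≤ 2 * ℓ := by rw [hr, hℓ]; linarith
      calc ∫ u in ℓ..r, |u| * E1 u ≤ r * ∫ u in ℓ..r, E1 u := hJ
        _ ≤ 2 * ℓ * ∫ u in ℓ..r, E1 u := mul_le_mul_of_nonneg_right hr2 hIpos.le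
        _ ≤ C1 * ℓ * ∫ u in ℓ..r, E1 u := by
            apply mul_le_mul_of_nonneg_right _ hIpos.le
            apply mul_le_mul_of_nonneg_right _ (by linarith)
            unfold C1
            nlinarith [mul_nonneg Bconst_nonneg he2.le, Real.add_one_le_exp (2:ℝ)]
    · -- m ≥ 1/2 : use FTC bound
      have hℓpos : (0:ℝ) < ℓ := by linarith
      have hJ : ∫ u in ℓ..r, |u| * E1 u ≤ E1 ℓ := by
        rw [hJeq]
        have hftc : ∫ u in ℓ..r, u * E1 u = (-E1 r) - (-E1 ℓ) := by
          apply intervalIntegral.integral_eq_sub_of_hasDerivAt (f := fun u => -E1 u)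
          · intro u _
            have h1 : HasDerivAt (fun v : ℝ => -v^2/2) (-u) u := by
              have h := ((hasDerivAt_pow 2 u).div_const 2).neg
              simp only [Nat.cast_ofNat, pow_one] at h
              convert h using 1
              · rfl
              · rfl
              · funext v; rw [Pi.neg_apply]; ring
              · ring
            have h2 := (h1.exp).neg
            convert h2 using 1
            · rfl
            unfold E1
            ring
          · exact ((continuous_id.mul E1_cont).intervalIntegrable _ _)
        rw [hftc]
        have := E1_pos r
        linarith
      have hI : (1/ℓ) * (E1 ℓ * Real.exp (-(3/2):ℝ)) ≤ ∫ u in ℓ..r, E1 u := by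
        have hsub : ℓ + 1/ℓ ≤ r := by
          have h1 : 1/ℓ ≤ 1 := by
            rw [div_le_one hℓpos]; linarith
          rw [hr, hℓ]; linarith
        have hkey : ∀ u ∈ Set.Icc ℓ (ℓ + 1/ℓ), E1 ℓ * Real.exp (-(3/2):ℝ) ≤ E1 u := by
          intro u hu
          have h1 : u ≤ ℓ + 1/ℓ := hu.2
          have h2 : ℓ ≤ u := hu.1
          have hu0 : 0 < u := lt_of_lt_of_le hℓpos h2
          unfold E1
          rw [← Real.exp_add]
          apply Real.exp_le_exp.2
          have hsq : u^2 ≤ (ℓ + 1/ℓ)^2 := by nlinarith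
          have hexpand : (ℓ + 1/ℓ)^2 = ℓ^2 + 2 + (1/ℓ)^2 := by
            field_simp; ring
          have hinv : (1/ℓ)^2 ≤ 1 := by
            have h1 : 1/ℓ ≤ 1 := by rw [div_le_one hℓpos]; linarith
            nlinarith [one_div_pos.2 hℓpos]
          nlinarith
        have h0 : ℓ ≤ ℓ + 1/ℓ := by linarith [one_div_pos.2 hℓpos]
        have := intervalIntegral_ge_const h0 hkey
        have heq : (ℓ + 1/ℓ - ℓ) = 1/ℓ := by ring
        rw [heq] at this
        exact this.trans (intervalIntegral_mono_set' E1_cont E1_nonneg le_rfl h0 hsub)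
      have he32 : Real.exp (-(3/2):ℝ) * Real.exp ((3/2):ℝ) = 1 := by
        rw [← Real.exp_add]; norm_num
      have hstep : E1 ℓ ≤ Real.exp ((3/2):ℝ) * ℓ * ∫ u in ℓ..r, E1 u := by
        have h1 : (Real.exp ((3/2):ℝ) * ℓ) * ((1/ℓ) * (E1 ℓ * Real.exp (-(3/2):ℝ))) = E1 ℓ := by
          rw [Real.exp_neg]
          have hℓ0 : ℓ ≠ 0 := ne_of_gt hℓpos
          have he0 : Real.exp ((3/2):ℝ) ≠ 0 := (Real.exp_pos _).ne'
          field_simp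
        calc E1 ℓ = (Real.exp ((3/2):ℝ) * ℓ) * ((1/ℓ) * (E1 ℓ * Real.exp (-(3/2):ℝ))) := h1.symm
          _ ≤ (Real.exp ((3/2):ℝ) * ℓ) * ∫ u in ℓ..r, E1 u :=
              mul_le_mul_of_nonneg_left hI (mul_nonneg (Real.exp_pos _).le hℓpos.le)
          _ = Real.exp ((3/2):ℝ) * ℓ * ∫ u in ℓ..r, E1 u := by ring
      calc ∫ u in ℓ..r, |u| * E1 u ≤ E1 ℓ := hJ
        _ ≤ Real.exp ((3/2):ℝ) * ℓ * ∫ u in ℓ..r, E1 u := hstep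
        _ ≤ C1 * ℓ * ∫ u in ℓ..r, E1 u := by
            apply mul_le_mul_of_nonneg_right _ hIpos.le
            apply mul_le_mul_of_nonneg_right _ hℓpos.le
            unfold C1
            have : Real.exp ((3/2):ℝ) ≤ Real.exp 2 := Real.exp_le_exp.2 (by norm_num)
            nlinarith [mul_nonneg Bconst_nonneg he2.le]

lemma ulemma (b m : ℝ) (hm : 0 < m) :
    ∫ u in (b-m)..(b+m), |u| * E1 u ≤
      C1 * max (|b| - m) 1 * ∫ u in (b-m)..(b+m), E1 u := by
  rcases le_or_gt 0 b with hb | hb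
  · rw [abs_of_nonneg hb]; exact ulemma_of_nonneg b m hm hb
  · have h := ulemma_of_nonneg (-b) m hm (by linarith)
    have e1 : ∫ u in (-b-m)..(-b+m), |u| * E1 u = ∫ u in (b-m)..(b+m), |u| * E1 u := by
      have : ∀ u : ℝ, |(-u)| * E1 (-u) = |u| * E1 u := by
        intro u; unfold E1; rw [abs_neg]; ring_nf
      rw [show ∫ u in (b-m)..(b+m), |u| * E1 u = ∫ u in (b-m)..(b+m), |(-u)| * E1 (-u) by
          simp_rw [this],
        intervalIntegral.integral_comp_neg (fun u => |u| * E1 u)]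
      congr 1 <;> ring
    have e2 : ∫ u in (-b-m)..(-b+m), E1 u = ∫ u in (b-m)..(b+m), E1 u := by
      have : ∀ u : ℝ, E1 (-u) = E1 u := by intro u; unfold E1; ring_nf
      rw [show ∫ u in (b-m)..(b+m), E1 u = ∫ u in (b-m)..(b+m), E1 (-u) by simp_rw [this],
        intervalIntegral.integral_comp_neg E1]
      congr 1 <;> ring
    rw [← e1, ← e2, ← abs_neg b, abs_of_nonneg (by linarith : (0:ℝ) ≤ -b)]
    exact h


lemma ylemma (σ μ a : ℝ) (hσ : 0 < σ) (hμ : 0 < μ) :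
    ∫ y in (-1:ℝ)..1, |a - μ*y| * Real.exp (-(a-μ*y)^2/(2*σ^2)) ≤
      C1 * (σ * max ((|a| - μ)/σ) 1) * ∫ y in (-1:ℝ)..1, Real.exp (-(a-μ*y)^2/(2*σ^2)) := by
  have hσ0 : σ ≠ 0 := hσ.ne'
  have hμ0 : (-μ) ≠ 0 := neg_ne_zero.2 hμ.ne'
  set FA : ℝ → ℝ := fun u => |u| * Real.exp (-u^2/(2*σ^2)) with hFA
  set FB : ℝ → ℝ := fun u => Real.exp (-u^2/(2*σ^2)) with hFB
  -- step 0: rewrite integrands as compositions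
  have h0A : (∫ y in (-1:ℝ)..1, |a - μ*y| * Real.exp (-(a-μ*y)^2/(2*σ^2)))
      = ∫ y in (-1:ℝ)..1, FA ((-μ) * y + a) := by
    apply intervalIntegral.integral_congr
    intro y _
    simp only [hFA]
    have : a - μ*y = (-μ)*y + a := by ring
    rw [← this]
  have h0B : (∫ y in (-1:ℝ)..1, Real.exp (-(a-μ*y)^2/(2*σ^2)))
      = ∫ y in (-1:ℝ)..1, FB ((-μ) * y + a) := by
    apply intervalIntegral.integral_congr
    intro y _
    simp only [hFB]
    have : a - μ*y = (-μ)*y + a := by ring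
    rw [← this]
  -- step 1: affine change of variables
  have h1 : ∀ F : ℝ → ℝ, (∫ y in (-1:ℝ)..1, F ((-μ) * y + a))
      = μ⁻¹ * ∫ u in (a - μ)..(a + μ), F u := by
    intro F
    rw [intervalIntegral.integral_comp_mul_add F hμ0 a]
    rw [show (-μ) * (-1) + a = a + μ by ring, show (-μ) * 1 + a = a - μ by ring]
    rw [intervalIntegral.integral_symm]
    simp [smul_eq_mul]
  -- step 2: scaling
  have hexpeq : ∀ u : ℝ, Real.exp (-u^2/(2*σ^2)) = E1 (u/σ) := by
    intro u
    simp only [E1]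
    congr 1
    rw [div_pow]
    ring
  have h2A : (∫ u in (a - μ)..(a + μ), FA u)
      = σ^2 * ∫ v in ((a-μ)/σ)..((a+μ)/σ), |v| * E1 v := by
    have step : ∀ u : ℝ, FA u = σ * ((fun v => |v| * E1 v) (u/σ)) := by
      intro u
      simp only [hFA, ← hexpeq u]
      rw [abs_div, abs_of_pos hσ]
      field_simp
    rw [show (∫ u in (a - μ)..(a + μ), FA u)
        = ∫ u in (a - μ)..(a + μ), σ * ((fun v => |v| * E1 v) (u/σ)) from
        intervalIntegral.integral_congr fun u _ => step u]
    rw [intervalIntegral.integral_const_mul,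
      intervalIntegral.integral_comp_div (fun v => |v| * E1 v) hσ0]
    simp only [smul_eq_mul]
    ring
  have h2B : (∫ u in (a - μ)..(a + μ), FB u)
      = σ * ∫ v in ((a-μ)/σ)..((a+μ)/σ), E1 v := by
    rw [show (∫ u in (a - μ)..(a + μ), FB u)
        = ∫ u in (a - μ)..(a + μ), E1 (u/σ) from
        intervalIntegral.integral_congr fun u _ => hexpeq u]
    rw [intervalIntegral.integral_comp_div E1 hσ0]
    simp only [smul_eq_mul]
  -- apply the u-space lemma
  have hu := ulemma (a/σ) (μ/σ) (div_pos hμ hσ)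
  have he1 : a/σ - μ/σ = (a-μ)/σ := by ring
  have he2 : a/σ + μ/σ = (a+μ)/σ := by ring
  have he3 : |a/σ| - μ/σ = (|a| - μ)/σ := by
    rw [abs_div, abs_of_pos hσ]; ring
  rw [he1, he2, he3] at hu
  -- put everything together
  rw [h0A, h0B, h1 FA, h1 FB, h2A, h2B]
  have hμinv : (0:ℝ) < μ⁻¹ := inv_pos.2 hμ
  calc μ⁻¹ * (σ^2 * ∫ v in ((a-μ)/σ)..((a+μ)/σ), |v| * E1 v)
      ≤ μ⁻¹ * (σ^2 * (C1 * max ((|a| - μ)/σ) 1 * ∫ v in ((a-μ)/σ)..((a+μ)/σ), E1 v)) := by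
        apply mul_le_mul_of_nonneg_left _ hμinv.le
        apply mul_le_mul_of_nonneg_left hu (sq_nonneg σ)
    _ = C1 * (σ * max ((|a| - μ)/σ) 1) * (μ⁻¹ * (σ * ∫ v in ((a-μ)/σ)..((a+μ)/σ), E1 v)) := by
        ring


lemma cube_measurable (D : ℕ) : MeasurableSet (cube D) := measurableSet_Icc

lemma mem_cube_iff {D : ℕ} (y : Fin D → ℝ) : y ∈ cube D ↔ ∀ j, y j ∈ Set.Icc (-1:ℝ) 1 := by
  constructor
  · intro hy j
    exact ⟨hy.1 j, hy.2 j⟩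
  · intro h
    exact ⟨fun j => (h j).1, fun j => (h j).2⟩

lemma gaussD_factor (D : ℕ) (σ : ℝ) (z : Fin D → ℝ) :
    gaussD D σ z = (2 * Real.pi * σ ^ 2) ^ (-(D : ℝ) / 2) *
      ∏ j, Real.exp (-(z j)^2 / (2 * σ ^ 2)) := by
  unfold gaussD
  congr 1
  rw [← Real.exp_sum]
  congr 1
  rw [← Finset.sum_div, ← Finset.sum_neg_distrib]

lemma gaussD_pos (D : ℕ) (σ : ℝ) (hσ : 0 < σ) (z : Fin D → ℝ) : 0 < gaussD D σ z := by
  unfold gaussD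
  have h1 : (0:ℝ) < 2 * Real.pi * σ ^ 2 := by positivity
  positivity

lemma gaussD_le (D : ℕ) (σ : ℝ) (hσ : 0 < σ) (z : Fin D → ℝ) :
    gaussD D σ z ≤ (2 * Real.pi * σ ^ 2) ^ (-(D : ℝ) / 2) := by
  unfold gaussD
  have h1 : (0:ℝ) < 2 * Real.pi * σ ^ 2 := by positivity
  have h2 : (0:ℝ) < (2 * Real.pi * σ ^ 2) ^ (-(D : ℝ) / 2) := by positivity
  have h3 : Real.exp (-(∑ i, z i ^ 2) / (2 * σ ^ 2)) ≤ 1 := by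
    rw [Real.exp_le_one_iff]
    apply div_nonpos_of_nonpos_of_nonneg
    · simp only [neg_nonpos]
      positivity
    · positivity
  nlinarith

/-- Fubini-type factorization of an integral of a product over the cube. -/
lemma cube_integral_prod (D : ℕ) (f : Fin D → ℝ → ℝ) :
    ∫ y in cube D, ∏ j, f j (y j) = ∏ j, ∫ r in Set.Icc (-1:ℝ) 1, f j r := by
  rw [← MeasureTheory.integral_indicator (cube_measurable D)]
  have key : (cube D).indicator (fun y => ∏ j, f j (y j)) =
      fun y => ∏ j, (Set.Icc (-1:ℝ) 1).indicator (f j) (y j) := by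
    funext y
    by_cases hy : y ∈ cube D
    · rw [Set.indicator_of_mem hy]
      apply Finset.prod_congr rfl
      intro j _
      rw [Set.indicator_of_mem (((mem_cube_iff y).1 hy) j)]
    · rw [Set.indicator_of_notMem hy]
      have : ∃ j, y j ∉ Set.Icc (-1:ℝ) 1 := by
        by_contra h
        push_neg at h
        exact hy ((mem_cube_iff y).2 h)
      obtain ⟨j, hj⟩ := this
      symm
      apply Finset.prod_eq_zero (Finset.mem_univ j)
      rw [Set.indicator_of_notMem hj]
  rw [key]
  rw [MeasureTheory.integral_fintype_prod_volume_eq_prod (ι := Fin D)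
    (f := fun j => (Set.Icc (-1:ℝ) 1).indicator (f j))]
  apply Finset.prod_congr rfl
  intro j _
  rw [MeasureTheory.integral_indicator measurableSet_Icc]

/-- positivity of 1-D gaussian-type integrals over `Icc (-1) 1` -/
lemma oneD_int_pos {g : ℝ → ℝ} (hg : Continuous g) (hpos : ∀ r, 0 < g r) :
    0 < ∫ r in Set.Icc (-1:ℝ) 1, g r := by
  rw [MeasureTheory.integral_Icc_eq_integral_Ioc,
    ← intervalIntegral.integral_of_le (by norm_num : (-1:ℝ) ≤ 1)]
  apply intervalIntegral_pos_of_pos_on (hg.intervalIntegrable _ _)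
    (fun r _ => hpos r)
  norm_num

lemma oneD_int_nonneg {g : ℝ → ℝ} (hnn : ∀ r, 0 ≤ g r) :
    0 ≤ ∫ r in Set.Icc (-1:ℝ) 1, g r :=
  setIntegral_nonneg measurableSet_Icc fun r _ => hnn r


lemma gaussD_continuous (D : ℕ) (σ : ℝ) : Continuous (gaussD D σ) := by
  unfold gaussD
  apply continuous_const.mul
  apply Real.continuous_exp.comp
  apply Continuous.div_const
  apply Continuous.neg
  exact continuous_finset_sum _ fun j _ => (continuous_apply j).pow 2

lemma cube_compact (D : ℕ) : IsCompact (cube D) := isCompact_Icc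

lemma cube_finite (D : ℕ) : volume (cube D) < ⊤ := (cube_compact D).measure_lt_top

lemma hasDerivAt_fwd (D : ℕ) (σ μv : ℝ) (hσ : 0 < σ) (hμv : 0 < μv)
    (p₀ : (Fin D → ℝ) → ℝ) (hmeas : Measurable p₀) (hnn : ∀ y, 0 ≤ p₀ y)
    (K : ℝ) (hbd : ∀ y, p₀ y ≤ K)
    (x : Fin D → ℝ) (i : Fin D) :
    HasDerivAt (fun s => ∫ y in cube D, p₀ y * gaussD D σ (Function.update x i s - μv • y))
      (∫ y in cube D, p₀ y * (-((x i - μv * y i)/σ^2) * gaussD D σ (x - μv • y))) (x i) := by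
  have hσ2 : (0:ℝ) < σ^2 := by positivity
  set c0 : ℝ := (2 * Real.pi * σ ^ 2) ^ (-(D : ℝ) / 2) with hc0def
  have hc0 : 0 < c0 := by rw [hc0def]; positivity
  set F : ℝ → (Fin D → ℝ) → ℝ :=
    fun s y => p₀ y * gaussD D σ (Function.update x i s - μv • y) with hF
  set F' : ℝ → (Fin D → ℝ) → ℝ :=
    fun s y => p₀ y * (-((s - μv * y i)/σ^2) * gaussD D σ (Function.update x i s - μv • y))
    with hF'
  -- pointwise derivative
  have key : ∀ (y : Fin D → ℝ) (s : ℝ), HasDerivAt (fun u => F u y) (F' s y) s := by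
    intro y s
    set S : ℝ := ∑ j ∈ Finset.univ \ {i}, ((x - μv • y) j)^2 with hS
    have hupd : ∀ u : ℝ, Function.update x i u - μv • y
        = Function.update (x - μv • y) i (u - μv * y i) := by
      intro u
      funext j
      by_cases h : j = i
      · subst h
        simp [Function.update_self]
      · simp [Function.update_of_ne h]
    have hsum : ∀ c : ℝ, ∑ j, (Function.update (x - μv • y) i c j)^2
        = c^2 + ∑ j ∈ Finset.univ \ {i}, ((x - μv • y) j)^2 := by
      intro c
      have h1 : ∀ j, (Function.update (x - μv • y) i c j)^2
          = Function.update (fun k => ((x - μv • y) k)^2) i (c^2) j := by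
        intro j
        exact Function.apply_update (fun _ r => r^2) (x - μv • y) i c j
      calc ∑ j, (Function.update (x - μv • y) i c j)^2
          = ∑ j, Function.update (fun k => ((x - μv • y) k)^2) i (c^2) j :=
            Finset.sum_congr rfl fun j _ => h1 j
        _ = c^2 + ∑ j ∈ Finset.univ \ {i}, ((x - μv • y) j)^2 := by
            simpa using Finset.sum_update_of_mem (Finset.mem_univ i)
              (fun k => ((x - μv • y) k)^2) (c^2)
    have hg : ∀ u : ℝ, gaussD D σ (Function.update x i u - μv • y)
        = c0 * Real.exp (-((u - μv * y i)^2 + S)/(2*σ^2)) := by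
      intro u
      unfold gaussD
      rw [hupd u, hsum, ← hc0def, ← hS]
    have h1 : HasDerivAt (fun u : ℝ => -((u - μv * y i)^2 + S)/(2*σ^2))
        (-(s - μv * y i)/σ^2) s := by
      have ha : HasDerivAt (fun u : ℝ => u - μv * y i) 1 s :=
        (hasDerivAt_id s).sub_const _
      have hb := ha.pow 2
      have hc := ((hb.add_const S).neg).div_const (2*σ^2)
      convert hc using 1
      · rfl
      · rfl
      · rfl
      field_simp
      ring
    have h2 := ((h1.exp).const_mul c0).const_mul (p₀ y)
    convert h2 using 1
    · rfl
    · rfl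
    · funext u
      simp only [hF]
      rw [hg u]
    · simp only [hF']
      rw [hg s]
      ring
  -- dominated convergence setup
  have hFmeas : ∀ s : ℝ, AEStronglyMeasurable (F s) (volume.restrict (cube D)) := by
    intro s
    apply Measurable.aestronglyMeasurable
    exact hmeas.mul ((gaussD_continuous D σ).comp
      (continuous_const.sub (continuous_id.const_smul μv))).measurable
  have hF'meas : AEStronglyMeasurable (F' (x i)) (volume.restrict (cube D)) := by
    apply Measurable.aestronglyMeasurable
    apply hmeas.mul
    have hcont : Continuous (fun y : Fin D → ℝ =>
        -((x i - μv * y i)/σ^2) * gaussD D σ (Function.update x i (x i) - μv • y)) := by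
      apply Continuous.mul
      · apply Continuous.neg
        apply Continuous.div_const
        exact continuous_const.sub (continuous_const.mul (continuous_apply i))
      · exact (gaussD_continuous D σ).comp
          (continuous_const.sub (continuous_id.const_smul μv))
    exact hcont.measurable
  have hFmeasV : ∀ s : ℝ, AEStronglyMeasurable (F s) volume := by
    intro s
    apply Measurable.aestronglyMeasurable
    exact hmeas.mul ((gaussD_continuous D σ).comp
      (continuous_const.sub (continuous_id.const_smul μv))).measurable
  have hK0 : 0 ≤ K := le_trans (hnn (fun _ => 0)) (hbd _)
  have hFint : Integrable (F (x i)) (volume.restrict (cube D)) := by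
    apply Measure.integrableOn_of_bounded (M := K * c0) (cube_finite D).ne (hFmeasV (x i))
    apply Filter.Eventually.of_forall
    intro y
    have h1 : 0 ≤ p₀ y := hnn y
    have h2 := gaussD_pos D σ hσ (Function.update x i (x i) - μv • y)
    have h3 := gaussD_le D σ hσ (Function.update x i (x i) - μv • y)
    simp only [hF]
    rw [Real.norm_eq_abs, abs_of_nonneg (mul_nonneg h1 h2.le)]
    rw [← hc0def] at h3
    exact mul_le_mul (hbd y) h3 h2.le hK0
  have h_bound : ∀ᵐ y ∂(volume.restrict (cube D)), ∀ s ∈ ball (x i) 1,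
      ‖F' s y‖ ≤ K * ((|x i| + 1 + μv)/σ^2 * c0) := by
    apply (ae_restrict_mem (cube_measurable D)).mono
    intro y hy s hs
    have h1 : 0 ≤ p₀ y := hnn y
    have h2 := gaussD_pos D σ hσ (Function.update x i s - μv • y)
    have h3 := gaussD_le D σ hσ (Function.update x i s - μv • y)
    rw [← hc0def] at h3
    have habs : |s - μv * y i| ≤ |x i| + 1 + μv := by
      have t1 := abs_sub_le s (x i) (μv * y i)
      have t2 : |x i - μv * y i| ≤ |x i| + |μv * y i| := by
        rw [sub_eq_add_neg]
        exact (abs_add_le _ _).trans (by rw [abs_neg])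
      have t3 : |μv * y i| ≤ μv := by
        rw [abs_mul, abs_of_pos hμv]
        have h6 : |y i| ≤ 1 := by
          have := (mem_cube_iff y).1 hy i
          rw [abs_le]; exact ⟨this.1, this.2⟩
        nlinarith
      have t4 : |s - x i| ≤ 1 := by
        rw [← Real.dist_eq]
        exact (mem_ball.1 hs).le
      calc |s - μv * y i| ≤ |s - x i| + |x i - μv * y i| := t1
        _ ≤ 1 + (|x i| + μv) := by linarith
        _ = |x i| + 1 + μv := by ring
    simp only [hF']
    rw [Real.norm_eq_abs, abs_mul, abs_of_nonneg h1, abs_mul, abs_neg, abs_div,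
      abs_of_pos h2, show |σ^2| = σ^2 from abs_of_pos hσ2]
    apply mul_le_mul (hbd y) _ _ hK0
    · apply mul_le_mul _ h3 h2.le (by positivity)
      gcongr
    · positivity
  have bound_int : Integrable (fun _ : Fin D → ℝ => K * ((|x i| + 1 + μv)/σ^2 * c0))
      (volume.restrict (cube D)) :=
    integrableOn_const (cube_finite D).ne
  have h_diff : ∀ᵐ y ∂(volume.restrict (cube D)), ∀ s ∈ ball (x i) 1,
      HasDerivAt (fun u => F u y) (F' s y) s :=
    Filter.Eventually.of_forall fun y s _ => key y s
  have H := hasDerivAt_integral_of_dominated_loc_of_deriv_le (ball_mem_nhds (x i) one_pos)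
    (Filter.Eventually.of_forall fun s => (hFmeasV s).restrict) hFint hF'meas h_bound
    bound_int h_diff
  have heq : (∫ y in cube D, F' (x i) y)
      = ∫ y in cube D, p₀ y * (-((x i - μv * y i)/σ^2) * gaussD D σ (x - μv • y)) := by
    simp only [hF', Function.update_eq_self i x]
  rw [← heq]
  exact H.2



/-- splitting a product over `Fin D` at one index. -/
lemma prod_slot {D : ℕ} (i : Fin D) (g h : Fin D → ℝ) :
    (∏ j, (if j = i then g j else h j)) = g i * ∏ j ∈ Finset.univ.erase i, h j := by
  rw [← Finset.mul_prod_erase Finset.univ _ (Finset.mem_univ i)]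
  congr 1
  · rw [if_pos rfl]
  · apply Finset.prod_congr rfl
    intro j hj
    rw [if_neg (Finset.ne_of_mem_erase hj)]

/-- Lemma A.2 of the paper: bound on the score function
`‖∇ₓ log p_t(x)‖₂ ≤ (C/σ_t) max((‖x‖_∞ - μ_t)/σ_t, 1)`. -/
theorem statement_17
    (D : ℕ) (hD : 0 < D) (K τ₁ τlo τhi : ℝ)
    (hK : 0 < K) (hτ₁ : 0 < τ₁) (hτlo : 0 < τlo) (hττ : τlo ≤ τhi) :
    ∃ C : ℝ, 0 < C ∧
      ∀ (p₀ : (Fin D → ℝ) → ℝ) (α : ℝ → ℝ),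
        ForwardHyp D τlo τhi α p₀ →
        (∀ x ∈ cube D, τ₁ ≤ p₀ x ∧ p₀ x ≤ K) →
        ∀ (x : Fin D → ℝ) (t : ℝ), 0 < t →
          Real.sqrt (∑ i, score D α p₀ x t i ^ 2) ≤
            C / sigmaT α t * max ((‖x‖ - muT α t) / sigmaT α t) 1 := by
  have hC1 := C1_pos
  have hsD : 0 < Real.sqrt D := Real.sqrt_pos.2 (by exact_mod_cast hD)
  refine ⟨Real.sqrt D * K * C1 / τ₁, by positivity, ?_⟩
  intro p₀ α hFH hbd x t ht
  obtain ⟨hp₀meas, hp₀nn, hp₀supp, _hp₀int1, hαmeas, hαbd⟩ := hFH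
  set μv := muT α t with hμvdef
  set σ := sigmaT α t with hσdef
  -- basic facts about μv and σ
  have hμv_pos : 0 < μv := Real.exp_pos _
  have hαint : IntegrableOn α (Set.Ioc 0 t) := by
    apply Measure.integrableOn_of_bounded (M := τhi) measure_Ioc_lt_top.ne
      hαmeas.aestronglyMeasurable
    apply (ae_restrict_mem measurableSet_Ioc).mono
    intro s hs
    have h := hαbd s hs.1.le
    rw [Real.norm_eq_abs, abs_of_pos (lt_of_lt_of_le hτlo h.1)]
    exact h.2
  have hIα : τlo * t ≤ ∫ s in Set.Ioc (0:ℝ) t, α s := by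
    have h1 : ∫ _s in Set.Ioc (0:ℝ) t, (τlo:ℝ) ≤ ∫ s in Set.Ioc (0:ℝ) t, α s := by
      apply setIntegral_mono_on (integrableOn_const measure_Ioc_lt_top.ne) hαint
        measurableSet_Ioc
      intro s hs
      exact (hαbd s hs.1.le).1
    rw [setIntegral_const, Real.volume_real_Ioc_of_le (by linarith : (0:ℝ) ≤ t), smul_eq_mul] at h1
    calc τlo * t = (t - 0) * τlo := by ring
      _ ≤ _ := h1
  have hμv_lt1 : μv < 1 := by
    rw [hμvdef]
    unfold muT
    rw [Real.exp_lt_one_iff]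
    have : 0 < τlo * t := mul_pos hτlo ht
    linarith
  have hσ_pos : 0 < σ := by
    rw [hσdef]
    unfold sigmaT
    rw [hμvdef] at hμv_pos hμv_lt1
    apply Real.sqrt_pos.2
    nlinarith
  have hσ2pos : 0 < σ^2 := by positivity
  have hK' : ∀ y, p₀ y ≤ K := by
    intro y
    by_cases hy : y ∈ cube D
    · exact (hbd y hy).2
    · rw [hp₀supp y hy]; exact hK.le
  set c0 : ℝ := (2 * Real.pi * σ ^ 2) ^ (-(D : ℝ) / 2) with hc0def
  have hc0 : 0 < c0 := by
    rw [hc0def]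
    have := Real.pi_pos
    positivity
  set If : Fin D → ℝ :=
    fun j => ∫ r in Set.Icc (-1:ℝ) 1, Real.exp (-(x j - μv*r)^2/(2*σ^2)) with hIfdef
  have hIf_pos : ∀ j, 0 < If j := by
    intro j
    apply oneD_int_pos
    · apply Real.continuous_exp.comp
      apply Continuous.div_const
      apply Continuous.neg
      exact (continuous_const.sub (continuous_const.mul continuous_id)).pow 2
    · intro r; exact Real.exp_pos _
  -- pointwise factorization of the gaussian
  have hgauss_eq : ∀ y : Fin D → ℝ, gaussD D σ (x - μv • y)
      = c0 * ∏ j, Real.exp (-(x j - μv * (y j))^2/(2*σ^2)) := by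
    intro y
    rw [gaussD_factor, ← hc0def]
    congr 1
  have hgcont : Continuous (fun y : Fin D → ℝ => gaussD D σ (x - μv • y)) :=
    (gaussD_continuous D σ).comp (continuous_const.sub (continuous_id.const_smul μv))
  have hG : ∫ y in cube D, gaussD D σ (x - μv • y) = c0 * ∏ j, If j := by
    calc ∫ y in cube D, gaussD D σ (x - μv • y)
        = ∫ y in cube D, c0 * ∏ j,
            (fun (j : Fin D) (r : ℝ) => Real.exp (-(x j - μv*r)^2/(2*σ^2))) j (y j) :=
          integral_congr_ae (Filter.Eventually.of_forall fun y => hgauss_eq y)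
      _ = c0 * ∫ y in cube D, ∏ j,
            (fun (j : Fin D) (r : ℝ) => Real.exp (-(x j - μv*r)^2/(2*σ^2))) j (y j) :=
          MeasureTheory.integral_const_mul c0 _
      _ = c0 * ∏ j, ∫ r in Set.Icc (-1:ℝ) 1,
            (fun (j : Fin D) (r : ℝ) => Real.exp (-(x j - μv*r)^2/(2*σ^2))) j r := by
          rw [cube_integral_prod D
            (fun (j : Fin D) (r : ℝ) => Real.exp (-(x j - μv*r)^2/(2*σ^2)))]
      _ = c0 * ∏ j, If j := rfl
  -- per-coordinate bound on the score
  have hscore_bd : ∀ i : Fin D,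
      |score D α p₀ x t i| ≤ (K * C1 / τ₁) / σ * max ((‖x‖ - μv)/σ) 1 := by
    intro i
    set Ji : ℝ := ∫ r in Set.Icc (-1:ℝ) 1,
      |x i - μv*r| * Real.exp (-(x i - μv*r)^2/(2*σ^2)) with hJidef
    set P : ℝ := ∏ j ∈ Finset.univ.erase i, If j with hPdef
    have hP_pos : 0 < P := Finset.prod_pos fun j _ => hIf_pos j
    have hJi_nonneg : 0 ≤ Ji :=
      oneD_int_nonneg fun r => mul_nonneg (abs_nonneg _) (Real.exp_pos _).le
    -- numerator factorization
    have hH : ∫ y in cube D, |x i - μv * y i| * gaussD D σ (x - μv • y)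
        = c0 * (Ji * P) := by
      set f : Fin D → ℝ → ℝ := fun j r =>
        if j = i then |x i - μv*r| * Real.exp (-(x i - μv*r)^2/(2*σ^2))
        else Real.exp (-(x j - μv*r)^2/(2*σ^2)) with hfdef
      have hintegrand : ∀ y : Fin D → ℝ, |x i - μv * y i| * gaussD D σ (x - μv • y)
          = c0 * ∏ j, f j (y j) := by
        intro y
        rw [hgauss_eq y]
        have h1 : (∏ j, f j (y j))
            = (|x i - μv * (y i)| * Real.exp (-(x i - μv * (y i))^2/(2*σ^2)))
              * ∏ j ∈ Finset.univ.erase i, Real.exp (-(x j - μv * (y j))^2/(2*σ^2)) :=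
          prod_slot i
            (fun j => |x i - μv * (y j)| * Real.exp (-(x i - μv * (y j))^2/(2*σ^2)))
            (fun j => Real.exp (-(x j - μv * (y j))^2/(2*σ^2)))
        rw [h1, ← Finset.mul_prod_erase Finset.univ
          (fun j => Real.exp (-(x j - μv * (y j))^2/(2*σ^2))) (Finset.mem_univ i)]
        ring
      have hslot : ∀ j, (∫ r in Set.Icc (-1:ℝ) 1, f j r) = if j = i then Ji else If j := by
        intro j
        by_cases h : j = i
        · subst h
          rw [if_pos rfl, hJidef]
          apply setIntegral_congr_fun measurableSet_Icc
          intro r _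
          rw [hfdef]
          simp
        · rw [if_neg h, hIfdef]
          apply setIntegral_congr_fun measurableSet_Icc
          intro r _
          rw [hfdef]
          simp [h]
      calc ∫ y in cube D, |x i - μv * y i| * gaussD D σ (x - μv • y)
          = ∫ y in cube D, c0 * ∏ j, f j (y j) :=
            integral_congr_ae (Filter.Eventually.of_forall fun y => hintegrand y)
        _ = c0 * ∫ y in cube D, ∏ j, f j (y j) := MeasureTheory.integral_const_mul c0 _
        _ = c0 * ∏ j, ∫ r in Set.Icc (-1:ℝ) 1, f j r := by rw [cube_integral_prod]
        _ = c0 * ∏ j, (if j = i then Ji else If j) := by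
            rw [Finset.prod_congr rfl fun j _ => hslot j]
        _ = c0 * (Ji * P) := by
            rw [prod_slot i (fun _ => Ji) If, hPdef]
    -- denominator lower bound
    have hgK : IntegrableOn (fun y => p₀ y * gaussD D σ (x - μv • y)) (cube D) := by
      apply Measure.integrableOn_of_bounded (M := K * c0) (cube_finite D).ne
        (hp₀meas.mul hgcont.measurable).aestronglyMeasurable
      apply Filter.Eventually.of_forall
      intro y
      have h2 := gaussD_pos D σ hσ_pos (x - μv • y)
      have h3 := gaussD_le D σ hσ_pos (x - μv • y)
      rw [← hc0def] at h3
      show ‖p₀ y * gaussD D σ (x - μv • y)‖ ≤ K * c0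
      rw [Real.norm_eq_abs, abs_of_nonneg (mul_nonneg (hp₀nn y) h2.le)]
      exact mul_le_mul (hK' y) h3 h2.le (le_trans (hp₀nn y) (hK' y))
    have hden : τ₁ * (c0 * (If i * P)) ≤ fwdDen D α p₀ t x := by
      have h0 : ∫ y in cube D, τ₁ * gaussD D σ (x - μv • y)
          ≤ ∫ y in cube D, p₀ y * gaussD D σ (x - μv • y) := by
        apply setIntegral_mono_on
          ((continuous_const.mul hgcont).continuousOn.integrableOn_compact (cube_compact D))
          hgK (cube_measurable D)
        intro y hy
        exact mul_le_mul_of_nonneg_right (hbd y hy).1 (gaussD_pos D σ hσ_pos _).le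
      have h1 : ∫ y in cube D, τ₁ * gaussD D σ (x - μv • y) = τ₁ * (c0 * (If i * P)) := by
        rw [MeasureTheory.integral_const_mul, hG,
          ← Finset.mul_prod_erase Finset.univ If (Finset.mem_univ i), hPdef]
      calc τ₁ * (c0 * (If i * P)) = ∫ y in cube D, τ₁ * gaussD D σ (x - μv • y) := h1.symm
        _ ≤ ∫ y in cube D, p₀ y * gaussD D σ (x - μv • y) := h0
        _ = fwdDen D α p₀ t x := rfl
    have hden_pos : 0 < τ₁ * (c0 * (If i * P)) :=
      mul_pos hτ₁ (mul_pos hc0 (mul_pos (hIf_pos i) hP_pos))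
    have hp_pos : 0 < fwdDen D α p₀ t x := lt_of_lt_of_le hden_pos hden
    -- derivative
    have hder := hasDerivAt_fwd D σ μv hσ_pos hμv_pos p₀ hp₀meas hp₀nn K hK' x i
    set d : ℝ := ∫ y in cube D, p₀ y * (-((x i - μv * y i)/σ^2) * gaussD D σ (x - μv • y))
      with hddef
    have hfx : (∫ y in cube D, p₀ y * gaussD D σ (Function.update x i (x i) - μv • y))
        = fwdDen D α p₀ t x := by
      rw [Function.update_eq_self i x]; rfl
    have hlog : HasDerivAt
        (fun s => Real.log (∫ y in cube D,
          p₀ y * gaussD D σ (Function.update x i s - μv • y)))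
        (d / fwdDen D α p₀ t x) (x i) := by
      have h := hder.log (by rw [hfx]; exact hp_pos.ne')
      rw [hfx] at h
      exact h
    have hscore_eq : score D α p₀ x t i = d / fwdDen D α p₀ t x := by
      have h0 : score D α p₀ x t i
          = deriv (fun s => Real.log (fwdDen D α p₀ t (Function.update x i s))) (x i) := rfl
      rw [h0]
      exact HasDerivAt.deriv hlog
    -- bound the numerator
    have hnum_int : IntegrableOn
        (fun y => p₀ y * (-((x i - μv * y i)/σ^2) * gaussD D σ (x - μv • y))) (cube D) := by
      have hcont2 : Continuous (fun y : Fin D → ℝ =>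
          -((x i - μv * y i)/σ^2) * gaussD D σ (x - μv • y)) := by
        apply Continuous.mul
        · apply Continuous.neg
          apply Continuous.div_const
          exact continuous_const.sub (continuous_const.mul (continuous_apply i))
        · exact hgcont
      apply Measure.integrableOn_of_bounded (M := K * ((|x i| + μv)/σ^2 * c0))
        (cube_finite D).ne (hp₀meas.mul hcont2.measurable).aestronglyMeasurable
      apply (ae_restrict_mem (cube_measurable D)).mono
      intro y hy
      have h2 := gaussD_pos D σ hσ_pos (x - μv • y)
      have h3 := gaussD_le D σ hσ_pos (x - μv • y)
      rw [← hc0def] at h3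
      have habs : |x i - μv * y i| ≤ |x i| + μv := by
        have t2 : |x i - μv * y i| ≤ |x i| + |μv * y i| := by
          rw [sub_eq_add_neg]
          exact (abs_add_le _ _).trans (by rw [abs_neg])
        have t3 : |μv * y i| ≤ μv := by
          rw [abs_mul, abs_of_pos hμv_pos]
          have h6 : |y i| ≤ 1 := by
            have := (mem_cube_iff y).1 hy i
            rw [abs_le]; exact ⟨this.1, this.2⟩
          nlinarith
        linarith
      show ‖p₀ y * (-((x i - μv * y i)/σ^2) * gaussD D σ (x - μv • y))‖ ≤ K * ((|x i| + μv)/σ^2 * c0)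
      rw [Real.norm_eq_abs, abs_mul, abs_of_nonneg (hp₀nn y), abs_mul, abs_neg, abs_div,
        abs_of_pos h2, show |σ^2| = σ^2 from abs_of_pos hσ2pos]
      apply mul_le_mul (hK' y) _ _ (le_trans (hp₀nn y) (hK' y))
      · apply mul_le_mul _ h3 h2.le (by positivity)
        exact div_le_div_of_nonneg_right habs hσ2pos.le
      · apply mul_nonneg (div_nonneg (abs_nonneg _) hσ2pos.le) h2.le
    have habs_num : |d| ≤ K/σ^2 * (c0 * (Ji * P)) := by
      have h1 : |d| ≤ ∫ y in cube D,
          |p₀ y * (-((x i - μv * y i)/σ^2) * gaussD D σ (x - μv • y))| := by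
        rw [hddef]
        calc |∫ y in cube D, p₀ y * (-((x i - μv * y i)/σ^2) * gaussD D σ (x - μv • y))|
            = ‖∫ y in cube D, p₀ y * (-((x i - μv * y i)/σ^2) * gaussD D σ (x - μv • y))‖ :=
              (Real.norm_eq_abs _).symm
          _ ≤ ∫ y in cube D,
              ‖p₀ y * (-((x i - μv * y i)/σ^2) * gaussD D σ (x - μv • y))‖ :=
              norm_integral_le_integral_norm _
          _ = ∫ y in cube D,
              |p₀ y * (-((x i - μv * y i)/σ^2) * gaussD D σ (x - μv • y))| := rfl
      have h2 : ∫ y in cube D,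
          |p₀ y * (-((x i - μv * y i)/σ^2) * gaussD D σ (x - μv • y))|
          ≤ ∫ y in cube D, K/σ^2 * (|x i - μv * y i| * gaussD D σ (x - μv • y)) := by
        apply setIntegral_mono_on hnum_int.abs
        · have hcont3 : Continuous (fun y : Fin D → ℝ =>
              K/σ^2 * (|x i - μv * y i| * gaussD D σ (x - μv • y))) := by
            apply Continuous.mul continuous_const
            apply Continuous.mul _ hgcont
            exact (continuous_const.sub (continuous_const.mul (continuous_apply i))).abs
          exact hcont3.continuousOn.integrableOn_compact (cube_compact D)
        · exact cube_measurable D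
        · intro y hy
          have h2' := gaussD_pos D σ hσ_pos (x - μv • y)
          rw [abs_mul, abs_of_nonneg (hp₀nn y), abs_mul, abs_neg, abs_div,
            abs_of_pos h2', show |σ^2| = σ^2 from abs_of_pos hσ2pos]
          calc p₀ y * (|x i - μv * y i|/σ^2 * gaussD D σ (x - μv • y))
              ≤ K * (|x i - μv * y i|/σ^2 * gaussD D σ (x - μv • y)) := by
                apply mul_le_mul_of_nonneg_right (hK' y)
                apply mul_nonneg (div_nonneg (abs_nonneg _) hσ2pos.le) h2'.le
            _ = K/σ^2 * (|x i - μv * y i| * gaussD D σ (x - μv • y)) := by ring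
      have h3 : ∫ y in cube D, K/σ^2 * (|x i - μv * y i| * gaussD D σ (x - μv • y))
          = K/σ^2 * (c0 * (Ji * P)) := by
        rw [MeasureTheory.integral_const_mul, hH]
      linarith
    -- combine
    have hfrac : |score D α p₀ x t i|
        ≤ (K/σ^2 * (c0 * (Ji * P))) / (τ₁ * (c0 * (If i * P))) := by
      rw [hscore_eq, abs_div, abs_of_pos hp_pos]
      apply div_le_div₀ _ habs_num hden_pos hden
      apply mul_nonneg (div_nonneg hK.le hσ2pos.le)
      exact mul_nonneg hc0.le (mul_nonneg hJi_nonneg hP_pos.le)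
    have hsimp : (K/σ^2 * (c0 * (Ji * P))) / (τ₁ * (c0 * (If i * P)))
        = K/(τ₁*σ^2) * (Ji / If i) := by
      field_simp [hc0.ne', hP_pos.ne', (hIf_pos i).ne', hτ₁.ne', hσ_pos.ne']
    -- 1-D estimate
    have hJi' : Ji = ∫ r in (-1:ℝ)..1,
        |x i - μv*r| * Real.exp (-(x i - μv*r)^2/(2*σ^2)) := by
      rw [intervalIntegral.integral_of_le (by norm_num : (-1:ℝ) ≤ 1), hJidef]
      exact MeasureTheory.integral_Icc_eq_integral_Ioc
    have hIi' : If i = ∫ r in (-1:ℝ)..1, Real.exp (-(x i - μv*r)^2/(2*σ^2)) := by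
      rw [intervalIntegral.integral_of_le (by norm_num : (-1:ℝ) ≤ 1)]
      show (∫ r in Set.Icc (-1:ℝ) 1, Real.exp (-(x i - μv*r)^2/(2*σ^2))) = _
      exact MeasureTheory.integral_Icc_eq_integral_Ioc
    have hyl := ylemma σ μv (x i) hσ_pos hμv_pos
    rw [← hJi', ← hIi'] at hyl
    have hstep : Ji / If i ≤ C1 * (σ * max ((|x i| - μv)/σ) 1) := by
      rw [div_le_iff₀ (hIf_pos i)]
      exact hyl
    have hmono : max ((|x i| - μv)/σ) 1 ≤ max ((‖x‖ - μv)/σ) 1 := by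
      apply max_le_max _ le_rfl
      apply div_le_div_of_nonneg_right _ hσ_pos.le
      have : |x i| ≤ ‖x‖ := by
        calc |x i| = ‖x i‖ := (Real.norm_eq_abs _).symm
          _ ≤ ‖x‖ := norm_le_pi_norm x i
      linarith
    have hmax_nonneg : (0:ℝ) ≤ max ((|x i| - μv)/σ) 1 :=
      le_trans zero_le_one (le_max_right _ _)
    calc |score D α p₀ x t i|
        ≤ K/(τ₁*σ^2) * (Ji / If i) := by rw [hsimp] at hfrac; exact hfrac
      _ ≤ K/(τ₁*σ^2) * (C1 * (σ * max ((|x i| - μv)/σ) 1)) := by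
          apply mul_le_mul_of_nonneg_left hstep
          positivity
      _ = (K * C1 / τ₁) / σ * max ((|x i| - μv)/σ) 1 := by
          field_simp
      _ ≤ (K * C1 / τ₁) / σ * max ((‖x‖ - μv)/σ) 1 := by
          apply mul_le_mul_of_nonneg_left hmono
          positivity
  -- sum the coordinates
  set M : ℝ := (K * C1 / τ₁) / σ * max ((‖x‖ - μv)/σ) 1 with hMdef
  have hM_nonneg : 0 ≤ M := by
    rw [hMdef]
    apply mul_nonneg (by positivity)
    exact le_trans zero_le_one (le_max_right _ _)
  have hsum : ∑ i, score D α p₀ x t i ^ 2 ≤ (D:ℝ) * M^2 := by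
    calc ∑ i, score D α p₀ x t i ^ 2 ≤ ∑ _i : Fin D, M^2 := by
          apply Finset.sum_le_sum
          intro i _
          have h := abs_le.1 (hscore_bd i)
          exact sq_le_sq' h.1 h.2
      _ = (D:ℝ) * M^2 := by
          rw [Finset.sum_const, Finset.card_univ, Fintype.card_fin, nsmul_eq_mul]
  calc Real.sqrt (∑ i, score D α p₀ x t i ^ 2)
      ≤ Real.sqrt ((D:ℝ) * M^2) := Real.sqrt_le_sqrt hsum
    _ = Real.sqrt D * M := by
        rw [Real.sqrt_mul (Nat.cast_nonneg D), Real.sqrt_sq hM_nonneg]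
    _ = Real.sqrt D * K * C1 / τ₁ / σ * max ((‖x‖ - μv)/σ) 1 := by
        rw [hMdef]; ring


end DMpaper

end
end
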